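/- arXiv:2212.12209 — 5 statements merged into one kernel-verified Lean document; each statement's English description precedes it below -/
import Mathlib

section
/- Lemma 1 (macroscale decay of Shannon mutual information for Lancaster–Sarmanov random fields): Under Assumption I, suppose that for every r > 0 the kernel Q_{γ(r)} converges in L²(μ⊗μ) and 1 + Q_{γ(r)}(u,v) ≥ 0 for a.e. (u,v). Then the Shannon mutual information between two marginal components of the field at spatial distance r, namely S_ϱ(r) := ∫∫ p_{γ(r)}(u,v) · ln( p_{γ(r)}(u,v) / (p(u)p(v)) ) du dv, satisfies S_ϱ(r) = O(r^{-ϱ}) as r → ∞. -/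
open MeasureTheory Real Filter Asymptotics
open scoped NNReal ENNReal

noncomputable section

/-- The measure `μ` on `ℝ` with density `p` with respect to Lebesgue measure. -/
def LSmeasure (p : ℝ → ℝ) : Measure ℝ :=
  volume.withDensity fun u => ENNReal.ofReal (p u)

/-- `p` is a measurable probability density on `ℝ`. -/
def IsProbDensity (p : ℝ → ℝ) : Prop :=
  Measurable p ∧ (∀ᵐ u : ℝ, 0 ≤ p u) ∧ (∫ u : ℝ, p u) = 1

/-- `(e k)` is a system of measurable functions, orthonormal in `L²(p(u) du)`,
with `e 0 ≡ 1`. -/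
def OrthonormalSystem (p : ℝ → ℝ) (e : ℕ → ℝ → ℝ) : Prop :=
  (∀ u, e 0 u = 1) ∧ (∀ k, Measurable (e k)) ∧
    ∀ k l, (∫ u : ℝ, e k u * e l u * p u) = if k = l then (1 : ℝ) else 0

/-- The Lancaster–Sarmanov kernel `Q_t(u,v) = ∑_{k ≥ 1} t^k e_k(u) e_k(v)`. -/
def LSker (e : ℕ → ℝ → ℝ) (t : ℝ) (u v : ℝ) : ℝ :=
  ∑' k : ℕ, t ^ (k + 1) * e (k + 1) u * e (k + 1) v

/-- The Lancaster–Sarmanov bivariate density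
`p_t(u,v) = p(u) p(v) (1 + Q_t(u,v))`. -/
def LSdens (p : ℝ → ℝ) (e : ℕ → ℝ → ℝ) (t : ℝ) (u v : ℝ) : ℝ :=
  p u * p v * (1 + LSker e t u v)

/-- The series defining the kernel `Q_t` converges in `L²(μ ⊗ μ)`: it is
a.e. (pointwise) summable and its partial sums converge to `Q_t` in
`L²((μ ⊗ μ))`-norm. -/
def KerConvergesInL2 (p : ℝ → ℝ) (e : ℕ → ℝ → ℝ) (t : ℝ) : Prop :=
  (∀ᵐ w : ℝ × ℝ ∂((LSmeasure p).prod (LSmeasure p)),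
      Summable fun k : ℕ => t ^ (k + 1) * e (k + 1) w.1 * e (k + 1) w.2) ∧
    Tendsto
      (fun n : ℕ =>
        ∫ w : ℝ × ℝ,
          (LSker e t w.1 w.2 -
              ∑ k ∈ Finset.range n, t ^ (k + 1) * e (k + 1) w.1 * e (k + 1) w.2) ^ 2
            ∂((LSmeasure p).prod (LSmeasure p)))
      atTop (nhds 0)

namespace LSaux

variable {p : ℝ → ℝ} {e : ℕ → ℝ → ℝ}

theorem integrable_p (hp : IsProbDensity p) : Integrable p volume := by
  by_contra h
  have := hp.2.2
  rw [integral_undef h] at this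
  norm_num at this

theorem isProb (hp : IsProbDensity p) : IsProbabilityMeasure (LSmeasure p) := by
  constructor
  rw [LSmeasure, withDensity_apply _ MeasurableSet.univ, Measure.restrict_univ,
    ← ofReal_integral_eq_lintegral_ofReal (integrable_p hp) hp.2.1, hp.2.2,
    ENNReal.ofReal_one]

theorem LSmeasure_eq (p : ℝ → ℝ) :
    LSmeasure p = volume.withDensity fun u => ((p u).toNNReal : ℝ≥0∞) := rfl

theorem integral_LS (hp : IsProbDensity p) (h : ℝ → ℝ) :
    ∫ u, h u ∂(LSmeasure p) = ∫ u, p u * h u := by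
  rw [LSmeasure_eq, integral_withDensity_eq_integral_smul hp.1.real_toNNReal]
  refine integral_congr_ae ?_
  filter_upwards [hp.2.1] with u hu
  simp [NNReal.smul_def, Real.coe_toNNReal _ hu]

theorem integrable_LS_iff (hp : IsProbDensity p) (h : ℝ → ℝ) :
    Integrable h (LSmeasure p) ↔ Integrable (fun u => p u * h u) volume := by
  rw [LSmeasure_eq, integrable_withDensity_iff_integrable_smul hp.1.real_toNNReal]
  refine integrable_congr ?_
  filter_upwards [hp.2.1] with u hu
  simp [NNReal.smul_def, Real.coe_toNNReal _ hu]

theorem integrable_eep (hp : IsProbDensity p) (he : OrthonormalSystem p e) (k l : ℕ) :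
    Integrable (fun u => p u * (e k u * e l u)) volume := by
  have base : ∀ m : ℕ, Integrable (fun u => e m u * e m u * p u) volume := by
    intro m
    by_contra h
    have := he.2.2 m m
    rw [integral_undef h] at this
    simp at this
  refine Integrable.mono' (((base k).add (base l)).div_const 2) ?_ ?_
  · exact ((hp.1.mul ((he.2.1 k).mul (he.2.1 l)))).aestronglyMeasurable
  · filter_upwards [hp.2.1] with u hu
    have h2 : |e k u * e l u| ≤ (e k u * e k u + e l u * e l u) / 2 := by
      rw [abs_mul]
      nlinarith [sq_nonneg (|e k u| - |e l u|), sq_abs (e k u), sq_abs (e l u),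
        abs_nonneg (e k u), abs_nonneg (e l u)]
    calc |p u * (e k u * e l u)| = p u * |e k u * e l u| := by
          rw [abs_mul, abs_of_nonneg hu]
      _ ≤ p u * ((e k u * e k u + e l u * e l u) / 2) :=
          mul_le_mul_of_nonneg_left h2 hu
      _ = (e k u * e k u * p u + e l u * e l u * p u) / 2 := by ring

theorem integrable_ee (hp : IsProbDensity p) (he : OrthonormalSystem p e) (k l : ℕ) :
    Integrable (fun u => e k u * e l u) (LSmeasure p) :=
  (integrable_LS_iff hp _).2 (integrable_eep hp he k l)

theorem integral_ee (hp : IsProbDensity p) (he : OrthonormalSystem p e) (k l : ℕ) :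
    ∫ u, e k u * e l u ∂(LSmeasure p) = if k = l then (1 : ℝ) else 0 := by
  rw [integral_LS hp]
  rw [show (fun u => p u * (e k u * e l u)) = fun u => e k u * e l u * p u from
    funext fun u => by ring]
  exact he.2.2 k l

theorem mul_log_bounds {x : ℝ} (hx : 0 ≤ 1 + x) :
    x ≤ (1 + x) * Real.log (1 + x) ∧ (1 + x) * Real.log (1 + x) ≤ x + x ^ 2 := by
  rcases eq_or_lt_of_le hx with h0 | h0
  · rw [← h0]
    have : x = -1 := by linarith
    simp [this]
  · have h1 : Real.log (1 + x) ≤ (1 + x) - 1 := Real.log_le_sub_one_of_pos h0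
    have h2 : Real.log (1 + x)⁻¹ ≤ (1 + x)⁻¹ - 1 := Real.log_le_sub_one_of_pos (inv_pos.2 h0)
    rw [Real.log_inv] at h2
    have h4 : (1 + x) * (1 + x)⁻¹ = 1 := mul_inv_cancel₀ h0.ne'
    constructor
    · have h3 : (1 + x) * (1 - (1 + x)⁻¹) ≤ (1 + x) * Real.log (1 + x) :=
        mul_le_mul_of_nonneg_left (by linarith) hx
      nlinarith
    · have h3 : (1 + x) * Real.log (1 + x) ≤ (1 + x) * ((1 + x) - 1) :=
        mul_le_mul_of_nonneg_left h1 hx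
      nlinarith

/-- Square-integral of the partial sums of the kernel. -/
theorem Sn_sq (hp : IsProbDensity p) (he : OrthonormalSystem p e) (t : ℝ) (n : ℕ) :
    Integrable (fun w : ℝ × ℝ =>
      (∑ k ∈ Finset.range n, t ^ (k + 1) * e (k + 1) w.1 * e (k + 1) w.2) ^ 2)
      ((LSmeasure p).prod (LSmeasure p)) ∧
    ∫ w : ℝ × ℝ,
      (∑ k ∈ Finset.range n, t ^ (k + 1) * e (k + 1) w.1 * e (k + 1) w.2) ^ 2
        ∂((LSmeasure p).prod (LSmeasure p))
      = ∑ k ∈ Finset.range n, t ^ (2 * (k + 1)) := by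
  haveI := isProb hp
  set μ := LSmeasure p
  have hee_int : ∀ k l : ℕ, Integrable (fun u => e k u * e l u) μ := integrable_ee hp he
  have hee : ∀ k l : ℕ, ∫ u, e k u * e l u ∂μ = if k = l then (1 : ℝ) else 0 :=
    integral_ee hp he
  have hrw : (fun w : ℝ × ℝ =>
      (∑ k ∈ Finset.range n, t ^ (k + 1) * e (k + 1) w.1 * e (k + 1) w.2) ^ 2)
      = fun w : ℝ × ℝ => ∑ k ∈ Finset.range n, ∑ l ∈ Finset.range n,
          (t ^ (k + 1) * t ^ (l + 1)) *
            ((fun u => e (k + 1) u * e (l + 1) u) w.1 *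
             (fun u => e (k + 1) u * e (l + 1) u) w.2) := by
    funext w
    rw [sq, Finset.sum_mul_sum]
    refine Finset.sum_congr rfl fun k _ => Finset.sum_congr rfl fun l _ => by ring
  have hint : ∀ k l : ℕ, Integrable (fun w : ℝ × ℝ =>
      (t ^ (k + 1) * t ^ (l + 1)) *
        ((fun u => e (k + 1) u * e (l + 1) u) w.1 *
         (fun u => e (k + 1) u * e (l + 1) u) w.2)) (μ.prod μ) :=
    fun k l => (((hee_int (k+1) (l+1)).mul_prod (hee_int (k+1) (l+1))).const_mul _)
  constructor
  · rw [hrw]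
    exact integrable_finset_sum _ fun k _ => integrable_finset_sum _ fun l _ => hint k l
  · rw [hrw, integral_finset_sum _ fun k _ => integrable_finset_sum _ fun l _ => hint k l]
    have hkl : ∀ k l : ℕ, ∫ w : ℝ × ℝ,
        (t ^ (k + 1) * t ^ (l + 1)) *
          ((fun u => e (k + 1) u * e (l + 1) u) w.1 *
           (fun u => e (k + 1) u * e (l + 1) u) w.2) ∂(μ.prod μ)
        = if k = l then t ^ (2 * (k + 1)) else 0 := by
      intro k l
      have hip := integral_prod_mul (μ := μ) (ν := μ)
        (fun u => e (k + 1) u * e (l + 1) u) (fun u => e (k + 1) u * e (l + 1) u)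
      rw [integral_const_mul, hip, hee (k+1) (l+1)]
      by_cases h : k = l
      · subst h; simp [← pow_add]; ring
      · have : ¬ (k + 1 = l + 1) := by omega
        simp [this, h]
    refine Finset.sum_congr rfl fun k hk => ?_
    rw [integral_finset_sum _ fun l _ => hint k l]
    calc (∑ l ∈ Finset.range n, ∫ w : ℝ × ℝ,
            (t ^ (k + 1) * t ^ (l + 1)) *
              ((fun u => e (k + 1) u * e (l + 1) u) w.1 *
               (fun u => e (k + 1) u * e (l + 1) u) w.2) ∂(μ.prod μ))
        = ∑ l ∈ Finset.range n, if k = l then t ^ (2 * (k + 1)) else 0 :=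
          Finset.sum_congr rfl fun l _ => hkl k l
      _ = t ^ (2 * (k + 1)) := by
          rw [Finset.sum_ite_eq]
          simp [Finset.mem_range.1 hk]

theorem geom_bound {t : ℝ} (ht0 : 0 ≤ t) (ht1 : t ≤ 1 / 2) (n : ℕ) :
    ∑ k ∈ Finset.range n, t ^ (2 * (k + 1)) ≤ 4 / 3 * t ^ 2 := by
  have h1 : ∀ k : ℕ, t ^ (2 * (k + 1)) = t ^ 2 * (t ^ 2) ^ k := by
    intro k; rw [← pow_mul]; ring
  have hx0 : (0 : ℝ) ≤ t ^ 2 := sq_nonneg t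
  have hx1 : t ^ 2 < 1 := by nlinarith
  calc ∑ k ∈ Finset.range n, t ^ (2 * (k + 1)) = t ^ 2 * ∑ k ∈ Finset.range n, (t ^ 2) ^ k := by
        rw [Finset.mul_sum]; exact Finset.sum_congr rfl fun k _ => h1 k
    _ ≤ t ^ 2 * ((t ^ 2) ^ 0 / (1 - t ^ 2)) := by
        refine mul_le_mul_of_nonneg_left ?_ hx0
        rw [Finset.range_eq_Ico]
        exact geom_sum_Ico_le_of_lt_one hx0 hx1
    _ ≤ 4 / 3 * t ^ 2 := by
        rw [pow_zero]
        have h34 : (3 : ℝ) / 4 ≤ 1 - t ^ 2 := by nlinarith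
        have : 1 / (1 - t ^ 2) ≤ 4 / 3 := by
          rw [div_le_div_iff₀ (by linarith) (by norm_num)]; linarith
        nlinarith

/-- The key estimate: for `0 ≤ t ≤ 1/2` the mutual-information integral is
bounded by `2 t`. -/
theorem key (hp : IsProbDensity p) (he : OrthonormalSystem p e) {t : ℝ}
    (ht0 : 0 ≤ t) (ht1 : t ≤ 1 / 2)
    (hsum : ∀ᵐ w : ℝ × ℝ ∂((LSmeasure p).prod (LSmeasure p)),
        Summable fun k : ℕ => t ^ (k + 1) * e (k + 1) w.1 * e (k + 1) w.2)
    (hpos : ∀ᵐ w : ℝ × ℝ ∂((LSmeasure p).prod (LSmeasure p)),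
        0 ≤ 1 + LSker e t w.1 w.2) :
    |∫ u : ℝ, ∫ v : ℝ,
        LSdens p e t u v * Real.log (LSdens p e t u v / (p u * p v))| ≤ 2 * t := by
  haveI := isProb hp
  set ν := (LSmeasure p).prod (LSmeasure p) with hν
  set Q : ℝ × ℝ → ℝ := fun w => LSker e t w.1 w.2 with hQdef
  set g : ℝ × ℝ → ℝ := fun w => (1 + Q w) * Real.log (1 + Q w) with hgdef
  set Sn : ℕ → ℝ × ℝ → ℝ :=
    fun n w => ∑ k ∈ Finset.range n, t ^ (k + 1) * e (k + 1) w.1 * e (k + 1) w.2 with hSndef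
  have hSnm : ∀ n, Measurable (Sn n) := by
    intro n
    refine Finset.measurable_sum _ fun k _ => ?_
    exact (measurable_const.mul ((he.2.1 (k+1)).comp measurable_fst)).mul
      ((he.2.1 (k+1)).comp measurable_snd)
  have htend : ∀ᵐ w ∂ν, Tendsto (fun n => Sn n w) atTop (nhds (Q w)) := by
    filter_upwards [hsum] with w hw
    simpa [hQdef, LSker, hSndef] using hw.hasSum.tendsto_sum_nat
  have hQae : AEMeasurable Q ν :=
    aemeasurable_of_tendsto_metrizable_ae _ (fun n => (hSnm n).aemeasurable) htend
  -- the `L²` bound via Fatou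
  have hSq := Sn_sq hp he t
  have hSnle : ∀ n, ∫⁻ w, ENNReal.ofReal (Sn n w ^ 2) ∂ν ≤ ENNReal.ofReal (4 / 3 * t ^ 2) := by
    intro n
    rw [← ofReal_integral_eq_lintegral_ofReal (hSq n).1
      (Eventually.of_forall fun w => sq_nonneg _)]
    exact ENNReal.ofReal_le_ofReal (by rw [(hSq n).2]; exact geom_bound ht0 ht1 n)
  have hlin : ∫⁻ w, ENNReal.ofReal (Q w ^ 2) ∂ν ≤ ENNReal.ofReal (4 / 3 * t ^ 2) := by
    have heq : ∀ᵐ w ∂ν,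
        ENNReal.ofReal (Q w ^ 2) = liminf (fun n => ENNReal.ofReal (Sn n w ^ 2)) atTop := by
      filter_upwards [htend] with w hw
      exact ((ENNReal.tendsto_ofReal (hw.pow 2)).liminf_eq).symm
    calc ∫⁻ w, ENNReal.ofReal (Q w ^ 2) ∂ν
        = ∫⁻ w, liminf (fun n => ENNReal.ofReal (Sn n w ^ 2)) atTop ∂ν :=
          lintegral_congr_ae heq
      _ ≤ liminf (fun n => ∫⁻ w, ENNReal.ofReal (Sn n w ^ 2) ∂ν) atTop :=
          lintegral_liminf_le fun n => ((hSnm n).pow_const 2).ennreal_ofReal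
      _ ≤ liminf (fun _ : ℕ => ENNReal.ofReal (4 / 3 * t ^ 2)) atTop :=
          liminf_le_liminf (Eventually.of_forall hSnle)
      _ = ENNReal.ofReal (4 / 3 * t ^ 2) := liminf_const _
  have hQsq_int : Integrable (fun w => Q w ^ 2) ν := by
    refine ⟨(hQae.pow_const 2).aestronglyMeasurable, ?_⟩
    rw [hasFiniteIntegral_iff_norm]
    calc ∫⁻ w, ENNReal.ofReal ‖Q w ^ 2‖ ∂ν = ∫⁻ w, ENNReal.ofReal (Q w ^ 2) ∂ν :=
          lintegral_congr fun w => by rw [Real.norm_eq_abs, abs_of_nonneg (sq_nonneg _)]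
      _ ≤ ENNReal.ofReal (4 / 3 * t ^ 2) := hlin
      _ < ⊤ := ENNReal.ofReal_lt_top
  have hIQsq : ∫ w, Q w ^ 2 ∂ν ≤ 4 / 3 * t ^ 2 := by
    rw [integral_eq_lintegral_of_nonneg_ae (Eventually.of_forall fun w => sq_nonneg _)
      (hQae.pow_const 2).aestronglyMeasurable]
    exact ENNReal.toReal_le_of_le_ofReal (by positivity) hlin
  have hIQsq0 : 0 ≤ ∫ w, Q w ^ 2 ∂ν := integral_nonneg fun w => sq_nonneg _
  have hQint : Integrable Q ν := by
    refine Integrable.mono' (((integrable_const (1 : ℝ)).add hQsq_int).div_const 2)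
      hQae.aestronglyMeasurable ?_
    refine Eventually.of_forall fun w => ?_
    simp only [Real.norm_eq_abs, Pi.add_apply]
    nlinarith [sq_nonneg (|Q w| - 1), sq_abs (Q w), abs_nonneg (Q w)]
  -- `∫ |Q| ≤ (7/6) t`
  have hpt : ∀ w, |Q w| ≤ (t + Q w ^ 2 / t) / 2 := by
    intro w
    rcases eq_or_lt_of_le ht0 with h | h
    · have hq0 : Q w = 0 := by simp [hQdef, LSker, ← h]
      simp [hq0, ← h]
    · have hd : Q w ^ 2 / t * t = Q w ^ 2 := div_mul_cancel₀ _ h.ne'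
      nlinarith [sq_nonneg (|Q w| - t), sq_abs (Q w), abs_nonneg (Q w)]
  have habsQ : ∫ w, |Q w| ∂ν ≤ 7 / 6 * t := by
    have hstep : ∫ w, |Q w| ∂ν ≤ ∫ w, (t + Q w ^ 2 / t) / 2 ∂ν :=
      integral_mono hQint.abs
        (((integrable_const t).add (hQsq_int.div_const t)).div_const 2) hpt
    have hval : ∫ w, (t + Q w ^ 2 / t) / 2 ∂ν = (t + (∫ w, Q w ^ 2 ∂ν) / t) / 2 := by
      rw [integral_div, integral_add (integrable_const t) (hQsq_int.div_const t),
        integral_const, integral_div]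
      simp
    have hq2t : (∫ w, Q w ^ 2 ∂ν) / t ≤ 4 / 3 * t := by
      rcases eq_or_lt_of_le ht0 with h | h
      · have h0 : ∫ w, Q w ^ 2 ∂ν = 0 := by
          refine le_antisymm ?_ hIQsq0
          have h1 := hIQsq
          rw [← h] at h1
          simpa using h1
        simp [h0, ← h]
      · rw [div_le_iff₀ h]; nlinarith [hIQsq]
    rw [hval] at hstep
    linarith
  -- bounds on `g`
  have hgb : ∀ᵐ w ∂ν, |g w| ≤ |Q w| + Q w ^ 2 := by
    filter_upwards [hpos] with w hw
    have hw' : 0 ≤ 1 + Q w := hw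
    obtain ⟨h1, h2⟩ := mul_log_bounds hw'
    rw [abs_le]
    constructor
    · have : -(|Q w| + Q w ^ 2) ≤ Q w := by nlinarith [neg_abs_le (Q w), sq_nonneg (Q w)]
      calc -(|Q w| + Q w ^ 2) ≤ Q w := this
        _ ≤ g w := h1
    · calc g w ≤ Q w + Q w ^ 2 := h2
        _ ≤ |Q w| + Q w ^ 2 := by nlinarith [le_abs_self (Q w)]
  have hg_meas : AEStronglyMeasurable g ν := by
    have h1 : AEMeasurable (fun w => 1 + Q w) ν := hQae.const_add 1
    exact (h1.mul (Real.measurable_log.comp_aemeasurable h1)).aestronglyMeasurable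
  have hg_int : Integrable g ν := Integrable.mono' (hQint.abs.add hQsq_int) hg_meas hgb
  have hgI : |∫ w, g w ∂ν| ≤ 2 * t := by
    calc |∫ w, g w ∂ν| ≤ ∫ w, |g w| ∂ν := by
          simpa [Real.norm_eq_abs] using norm_integral_le_integral_norm (μ := ν) g
      _ ≤ ∫ w, (|Q w| + Q w ^ 2) ∂ν := integral_mono_ae hg_int.abs
          (hQint.abs.add hQsq_int) hgb
      _ = (∫ w, |Q w| ∂ν) + ∫ w, Q w ^ 2 ∂ν := integral_add hQint.abs hQsq_int
      _ ≤ 7 / 6 * t + 4 / 3 * t ^ 2 := add_le_add habsQ hIQsq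
      _ ≤ 2 * t := by nlinarith
  -- the pointwise identity and Fubini
  have hpt_eq : ∀ u v : ℝ,
      LSdens p e t u v * Real.log (LSdens p e t u v / (p u * p v))
        = p u * (p v * g (u, v)) := by
    intro u v
    have hg' : g (u, v) = (1 + LSker e t u v) * Real.log (1 + LSker e t u v) := rfl
    by_cases hc : p u * p v = 0
    · rw [LSdens]
      rcases mul_eq_zero.1 hc with h | h <;> simp [h]
    · have hd : LSdens p e t u v / (p u * p v) = 1 + LSker e t u v := by
        rw [LSdens, mul_comm (p u * p v), mul_div_assoc, div_self hc, mul_one]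
      rw [hd, LSdens, hg']; ring
  have hub : (∫ u : ℝ, ∫ v : ℝ,
      LSdens p e t u v * Real.log (LSdens p e t u v / (p u * p v))) = ∫ w, g w ∂ν := by
    calc (∫ u : ℝ, ∫ v : ℝ,
        LSdens p e t u v * Real.log (LSdens p e t u v / (p u * p v)))
        = ∫ u : ℝ, ∫ v : ℝ, p u * (p v * g (u, v)) := by
          refine integral_congr_ae (Eventually.of_forall fun u => ?_)
          refine integral_congr_ae (Eventually.of_forall fun v => ?_)
          exact hpt_eq u v
      _ = ∫ u : ℝ, p u * ∫ v : ℝ, p v * g (u, v) := by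
          refine integral_congr_ae (Eventually.of_forall fun u => ?_)
          exact integral_const_mul _ _
      _ = ∫ u : ℝ, p u * ∫ v : ℝ, g (u, v) ∂(LSmeasure p) := by
          refine integral_congr_ae (Eventually.of_forall fun u => ?_)
          simp only []
          rw [integral_LS hp (fun v => g (u, v))]
      _ = ∫ u : ℝ, (∫ v : ℝ, g (u, v) ∂(LSmeasure p)) ∂(LSmeasure p) :=
          (integral_LS hp _).symm
      _ = ∫ w, g w ∂ν := (integral_prod g hg_int).symm
  rw [hub]
  exact hgI

end LSaux

/-- **Lemma 1.** Under Assumption I, the Shannon mutual information between two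
marginal components of a Lancaster–Sarmanov random field at spatial distance `r`
decays as `O(r^{-ϱ})` as `r → ∞`. -/
theorem shannon_mutual_information_macroscale_decay
    (p : ℝ → ℝ) (e : ℕ → ℝ → ℝ) (γ : ℝ → ℝ) (ϱ : ℝ) (hϱ : 0 < ϱ)
    (hp : IsProbDensity p) (he : OrthonormalSystem p e)
    (hγrange : ∀ r > (0 : ℝ), γ r ∈ Set.Ico (0 : ℝ) 1)
    (hγ0 : Tendsto γ atTop (nhds 0))
    (hγO : γ =O[atTop] fun r : ℝ => r ^ (-ϱ))
    (hconv : ∀ r > (0 : ℝ), KerConvergesInL2 p e (γ r))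
    (hnonneg : ∀ r > (0 : ℝ),
      ∀ᵐ w : ℝ × ℝ ∂((LSmeasure p).prod (LSmeasure p)),
        0 ≤ 1 + LSker e (γ r) w.1 w.2) :
    (fun r : ℝ =>
        ∫ u : ℝ, ∫ v : ℝ,
          LSdens p e (γ r) u v * Real.log (LSdens p e (γ r) u v / (p u * p v)))
      =O[atTop] fun r : ℝ => r ^ (-ϱ) := by
  have hO : (fun r : ℝ =>
      ∫ u : ℝ, ∫ v : ℝ,
        LSdens p e (γ r) u v * Real.log (LSdens p e (γ r) u v / (p u * p v)))
      =O[atTop] γ := by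
    rw [Asymptotics.isBigO_iff]
    refine ⟨2, ?_⟩
    filter_upwards [eventually_gt_atTop (0 : ℝ),
      hγ0.eventually_lt_const (show (0 : ℝ) < 1 / 2 by norm_num)] with r hr hrlt
    have hmem := hγrange r hr
    have hkey := LSaux.key hp he hmem.1 hrlt.le (hconv r hr).1 (hnonneg r hr)
    rw [Real.norm_eq_abs, Real.norm_eq_abs, abs_of_nonneg hmem.1]
    exact hkey
  exact hO.trans hγO

end
end

section
/- Joint probability mass function of the subordinated pair: under the rank-m condition, for every t ∈ [0,1) and all i, j, the joint probabilities π_{ij}(t) := ∫_{A_i × A_j} p_t(u,v) du dv satisfy π_{ij}(t) = p_i p_j + Σ_{h≥m} t^h c_{h,i} c_{h,j}, where c_{h,i} := ∫_{A_i} e_h(u) p(u) du and the series converges absolutely; in particular |π_{ij}(t) − p_i p_j| ≤ t^m/(1 − t). -/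
open MeasureTheory Real Filter Asymptotics
open scoped ENNReal NNReal

noncomputable section

/-- **Joint probability mass function of the subordinated pair:** under the
rank-`m` condition, for every `t ∈ [0,1)` and all `i, j`,
`π_{ij}(t) = p_i p_j + ∑_{h ≥ m} t^h c_{h,i} c_{h,j}`, where
`c_{h,i} = ∫_{A_i} e_h(u) p(u) du`, the series converging absolutely; in
particular `|π_{ij}(t) − p_i p_j| ≤ t^m / (1 − t)`. -/
theorem subordinated_joint_pmf
    (p : ℝ → ℝ) (e : ℕ → ℝ → ℝ)
    (hp : IsProbDensity p) (he : OrthonormalSystem p e)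
    (t : ℝ) (ht : t ∈ Set.Ico (0 : ℝ) 1)
    (hconv : KerConvergesInL2 p e t)
    (hnonneg : ∀ᵐ w : ℝ × ℝ, 0 ≤ LSdens p e t w.1 w.2)
    (N : ℕ) (A : Fin N → Set ℝ)
    (hAmeas : ∀ i, MeasurableSet (A i))
    (hAdisj : Pairwise (Function.onFun Disjoint A))
    (hAfull : LSmeasure p (⋃ i, A i)ᶜ = 0)
    (hApos : ∀ i, 0 < ∫ u in A i, p u)
    (m : ℕ) (hm : 1 ≤ m)
    (hrank : ∀ i, ∀ h : ℕ, 1 ≤ h → h < m → (∫ u in A i, e h u * p u) = 0) :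
    ∀ i j : Fin N,
      Summable
        (fun h : ℕ =>
          |t ^ (m + h) * (∫ u in A i, e (m + h) u * p u) *
              (∫ u in A j, e (m + h) u * p u)|) ∧
      (∫ u in A i, ∫ v in A j, LSdens p e t u v)
          = (∫ u in A i, p u) * (∫ u in A j, p u) +
            ∑' h : ℕ,
              t ^ (m + h) * (∫ u in A i, e (m + h) u * p u) *
                (∫ u in A j, e (m + h) u * p u) ∧
      |(∫ u in A i, ∫ v in A j, LSdens p e t u v) -
          (∫ u in A i, p u) * (∫ u in A j, p u)|
        ≤ t ^ m / (1 - t) := by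
  obtain ⟨hpmeas, hpnn, hpint1⟩ := hp
  obtain ⟨he0, hemeas, heortho⟩ := he
  obtain ⟨ht0, ht1⟩ := ht
  have heo : ∀ k, (∫ u : ℝ, e k u * e k u * p u) = 1 := by
    intro k; simpa using heortho k k
  -- basic integrability facts
  have hpInt : Integrable p := by
    by_contra h
    rw [integral_undef h] at hpint1; norm_num at hpint1
  have heInt : ∀ k, Integrable (fun u => e k u * e k u * p u) := by
    intro k
    by_contra h
    have h2 := heo k
    rw [integral_undef h] at h2; norm_num at h2
  have hgInt : ∀ k, Integrable (fun u => (e k u * e k u * p u + p u) / 2) :=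
    fun k => ((heInt k).add hpInt).div_const 2
  have hbd : ∀ k, ∀ᵐ u : ℝ, ‖|e k u| * p u‖ ≤ (e k u * e k u * p u + p u) / 2 := by
    intro k
    filter_upwards [hpnn] with u hu
    rw [Real.norm_eq_abs, abs_of_nonneg (mul_nonneg (abs_nonneg _) hu)]
    nlinarith [sq_nonneg (|e k u| - 1), abs_nonneg (e k u), sq_abs (e k u), hu]
  have habs : ∀ k, Integrable (fun u => |e k u| * p u) := by
    intro k
    exact Integrable.mono' (hgInt k) ((hemeas k).abs.mul hpmeas).aestronglyMeasurable (hbd k)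
  have han : ∀ k, (∫ u : ℝ, |e k u| * p u) ≤ 1 := by
    intro k
    have h1 : (∫ u : ℝ, |e k u| * p u) ≤ ∫ u : ℝ, (e k u * e k u * p u + p u) / 2 := by
      refine integral_mono_ae (habs k) (hgInt k) ?_
      filter_upwards [hbd k] with u hu
      calc |e k u| * p u ≤ ‖|e k u| * p u‖ := le_abs_self _
        _ ≤ _ := hu
    rw [integral_div, integral_add (heInt k) hpInt, heo k, hpint1] at h1
    linarith
  have hJ : ∀ k (S : Set ℝ), (∫ u in S, |e k u| * p u) ≤ 1 := by
    intro k S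
    refine le_trans (setIntegral_le_integral (habs k) ?_) (han k)
    filter_upwards [hpnn] with u hu
    exact mul_nonneg (abs_nonneg _) hu
  have hcbd : ∀ k (S : Set ℝ), |∫ u in S, e k u * p u| ≤ 1 := by
    intro k S
    calc |∫ u in S, e k u * p u| ≤ ∫ u in S, |e k u| * |p u| := by
          simpa [Real.norm_eq_abs, abs_mul] using
            norm_integral_le_integral_norm (μ := volume.restrict S) (fun u => e k u * p u)
      _ = ∫ u in S, |e k u| * p u := by
          refine integral_congr_ae ?_
          filter_upwards [ae_restrict_of_ae hpnn] with u hu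
          rw [abs_of_nonneg hu]
      _ ≤ 1 := hJ k S
  -- lintegral bound for the factors
  have hfacbd : ∀ k (S : Set ℝ),
      (∫⁻ u in S, ENNReal.ofReal (|e k u| * |p u|)) ≤ 1 := by
    intro k S
    have h1 : (∫⁻ u in S, ENNReal.ofReal (|e k u| * |p u|)) =
        ∫⁻ u in S, ENNReal.ofReal (|e k u| * p u) := by
      refine lintegral_congr_ae ?_
      filter_upwards [ae_restrict_of_ae hpnn] with u hu
      rw [abs_of_nonneg hu]
    rw [h1]
    have h2 : (∫⁻ u in S, ENNReal.ofReal (|e k u| * p u)) =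
        ENNReal.ofReal (∫ u in S, |e k u| * p u) := by
      rw [ofReal_integral_eq_lintegral_ofReal ((habs k).restrict) ?_]
      filter_upwards [ae_restrict_of_ae hpnn] with u hu
      exact mul_nonneg (abs_nonneg _) hu
    rw [h2]
    calc ENNReal.ofReal (∫ u in S, |e k u| * p u) ≤ ENNReal.ofReal 1 :=
          ENNReal.ofReal_le_ofReal (hJ k S)
      _ = 1 := ENNReal.ofReal_one
  -- geometric summability
  have hgeom : Summable (fun k : ℕ => t ^ (k + 1)) := by
    simpa [pow_succ] using (summable_geometric_of_lt_one ht0 ht1).mul_right t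
  intro i j
  set μi := volume.restrict (A i) with hμi
  set μj := volume.restrict (A j) with hμj
  set ρ := μi.prod μj with hρ
  set f : ℕ → ℝ × ℝ → ℝ :=
    fun k w => p w.1 * p w.2 * (t ^ (k + 1) * e (k + 1) w.1 * e (k + 1) w.2) with hf
  have hfmeas : ∀ k, Measurable (f k) := by
    intro k
    exact ((hpmeas.comp measurable_fst).mul (hpmeas.comp measurable_snd)).mul
      (((measurable_const.mul ((hemeas (k + 1)).comp measurable_fst))).mul
        ((hemeas (k + 1)).comp measurable_snd))
  -- nnnorm formula
  have hnorm : ∀ k (w : ℝ × ℝ), (‖f k w‖₊ : ℝ≥0∞) =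
      ENNReal.ofReal (t ^ (k + 1)) *
        (ENNReal.ofReal (|e (k + 1) w.1| * |p w.1|) *
          ENNReal.ofReal (|e (k + 1) w.2| * |p w.2|)) := by
    intro k w
    rw [show ((‖f k w‖₊ : ℝ≥0∞)) = ENNReal.ofReal ‖f k w‖ from (ofReal_norm _).symm, Real.norm_eq_abs]
    rw [← ENNReal.ofReal_mul (by positivity), ← ENNReal.ofReal_mul (by positivity)]
    congr 1
    rw [hf]
    rw [abs_mul, abs_mul, abs_mul, abs_mul, abs_of_nonneg (pow_nonneg ht0 _)]
    ring
  have hlint : ∀ k, (∫⁻ w, ‖f k w‖₊ ∂ρ) ≤ ENNReal.ofReal (t ^ (k + 1)) := by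
    intro k
    have h1 : (∫⁻ w, ‖f k w‖₊ ∂ρ) = ENNReal.ofReal (t ^ (k + 1)) *
        ∫⁻ w, ENNReal.ofReal (|e (k + 1) w.1| * |p w.1|) *
          ENNReal.ofReal (|e (k + 1) w.2| * |p w.2|) ∂ρ := by
      simp_rw [hnorm k]
      exact lintegral_const_mul' _ _ ENNReal.ofReal_ne_top
    rw [h1, hρ]
    rw [lintegral_prod_mul (μ := μi) (ν := μj) (f := fun u => ENNReal.ofReal (|e (k + 1) u| * |p u|))
      (g := fun u => ENNReal.ofReal (|e (k + 1) u| * |p u|))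
      (((((hemeas (k + 1)).abs.mul hpmeas.abs)).ennreal_ofReal).aemeasurable)
      (((((hemeas (k + 1)).abs.mul hpmeas.abs)).ennreal_ofReal).aemeasurable)]
    calc ENNReal.ofReal (t ^ (k + 1)) *
        ((∫⁻ u, ENNReal.ofReal (|e (k + 1) u| * |p u|) ∂μi) *
          ∫⁻ v, ENNReal.ofReal (|e (k + 1) v| * |p v|) ∂μj)
        ≤ ENNReal.ofReal (t ^ (k + 1)) * (1 * 1) := by
          exact mul_le_mul_right (mul_le_mul' (hfacbd (k + 1) (A i)) (hfacbd (k + 1) (A j))) _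
      _ = ENNReal.ofReal (t ^ (k + 1)) := by simp
  have hsum' : (∑' k, ∫⁻ w, ‖f k w‖₊ ∂ρ) ≠ ⊤ := by
    refine ne_top_of_le_ne_top ?_ (ENNReal.tsum_le_tsum hlint)
    rw [← ENNReal.ofReal_tsum_of_nonneg (fun k => pow_nonneg ht0 _) hgeom]
    exact ENNReal.ofReal_ne_top
  have hfaem : ∀ k, AEMeasurable (fun w => (‖f k w‖₊ : ℝ≥0∞)) ρ :=
    fun k => ((hfmeas k).nnnorm.coe_nnreal_ennreal).aemeasurable
  have haesum : ∀ᵐ w ∂ρ, Summable fun k => ‖f k w‖₊ := by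
    have h1 : (∫⁻ w, ∑' k, (‖f k w‖₊ : ℝ≥0∞) ∂ρ) ≠ ⊤ := by
      rw [lintegral_tsum hfaem]; exact hsum'
    filter_upwards [ae_lt_top' (AEMeasurable.ennreal_tsum hfaem) h1] with w hw
    exact ENNReal.tsum_coe_ne_top_iff_summable.mp hw.ne
  have haesum' : ∀ᵐ w ∂ρ, Summable fun k => f k w := by
    filter_upwards [haesum] with w hw
    exact hw.of_nnnorm
  -- integrability of the series
  have hQmeas : AEStronglyMeasurable (fun w => ∑' k, f k w) ρ := by
    refine aestronglyMeasurable_of_tendsto_ae atTop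
      (fun n => (Finset.measurable_sum (Finset.range n)
        (fun k _ => hfmeas k)).aestronglyMeasurable) ?_
    filter_upwards [haesum'] with w hw
    exact hw.hasSum.tendsto_sum_nat
  have hQint : Integrable (fun w => ∑' k, f k w) ρ := by
    refine ⟨hQmeas, ?_⟩
    rw [hasFiniteIntegral_def]
    have hle : (∫⁻ w, ‖∑' k, f k w‖₊ ∂ρ) ≤ ∫⁻ w, ∑' k, (‖f k w‖₊ : ℝ≥0∞) ∂ρ := by
      refine lintegral_mono_ae ?_
      filter_upwards [haesum] with w hw
      calc (‖∑' k, f k w‖₊ : ℝ≥0∞) ≤ ((∑' k, ‖f k w‖₊ : ℝ≥0) : ℝ≥0∞) :=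
            ENNReal.coe_le_coe.mpr (nnnorm_tsum_le hw)
        _ = ∑' k, (‖f k w‖₊ : ℝ≥0∞) := ENNReal.coe_tsum hw
    refine lt_of_le_of_lt hle ?_
    rw [lintegral_tsum hfaem]
    exact lt_top_iff_ne_top.mpr hsum'
  have hppInt : Integrable (fun w : ℝ × ℝ => p w.1 * p w.2) ρ :=
    (hpInt.restrict).mul_prod (hpInt.restrict)
  have hFeq : (fun w : ℝ × ℝ => LSdens p e t w.1 w.2) =
      fun w => p w.1 * p w.2 + ∑' k, f k w := by
    funext w
    rw [LSdens, LSker, hf]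
    rw [tsum_mul_left]
    ring
  have hFInt : Integrable (fun w : ℝ × ℝ => LSdens p e t w.1 w.2) ρ := by
    rw [hFeq]; exact hppInt.add hQint
  -- value of each term
  have hval : ∀ k, (∫ w, f k w ∂ρ) =
      t ^ (k + 1) * (∫ u in A i, e (k + 1) u * p u) * (∫ u in A j, e (k + 1) u * p u) := by
    intro k
    have h1 : f k = fun w : ℝ × ℝ =>
        t ^ (k + 1) * ((fun u => e (k + 1) u * p u) w.1 * (fun u => e (k + 1) u * p u) w.2) := by
      funext w; rw [hf]; ring
    rw [h1, integral_const_mul, hρ,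
      integral_prod_mul (fun u => e (k + 1) u * p u) (fun u => e (k + 1) u * p u), mul_assoc]
  -- swap integral and sum
  have hswap : (∫ w, (∑' k, f k w) ∂ρ) =
      ∑' k, t ^ (k + 1) * (∫ u in A i, e (k + 1) u * p u) * (∫ u in A j, e (k + 1) u * p u) := by
    rw [integral_tsum (fun k => (hfmeas k).aestronglyMeasurable) hsum']
    exact tsum_congr hval
  -- summability of coefficient series
  set c : ℕ → Set ℝ → ℝ := fun k S => ∫ u in S, e k u * p u with hc
  have hterm_bd : ∀ (n : ℕ), |t ^ n * c n (A i) * c n (A j)| ≤ t ^ n := by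
    intro n
    rw [abs_mul, abs_mul, abs_of_nonneg (pow_nonneg ht0 _)]
    calc t ^ n * |c n (A i)| * |c n (A j)| ≤ t ^ n * 1 * 1 := by
          refine mul_le_mul (mul_le_mul le_rfl (hcbd n (A i)) (abs_nonneg _)
            (pow_nonneg ht0 _)) (hcbd n (A j)) (abs_nonneg _) ?_
          positivity
      _ = t ^ n := by ring
  have hsummable_g : Summable (fun k : ℕ => t ^ (k + 1) * c (k + 1) (A i) * c (k + 1) (A j)) := by
    rw [← summable_abs_iff]
    exact Summable.of_nonneg_of_le (fun k => abs_nonneg _) (fun k => hterm_bd (k + 1)) hgeom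
  have hsummable_tail : Summable
      (fun h : ℕ => |t ^ (m + h) * c (m + h) (A i) * c (m + h) (A j)|) := by
    have hg2 : Summable (fun h : ℕ => t ^ (m + h)) := by
      simp_rw [pow_add]
      exact (summable_geometric_of_lt_one ht0 ht1).mul_left (t ^ m)
    exact Summable.of_nonneg_of_le (fun k => abs_nonneg _) (fun k => hterm_bd (m + k)) hg2
  -- reindexing
  have hreindex : (∑' k : ℕ, t ^ (k + 1) * c (k + 1) (A i) * c (k + 1) (A j)) =
      ∑' h : ℕ, t ^ (m + h) * c (m + h) (A i) * c (m + h) (A j) := by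
    rw [← Summable.sum_add_tsum_nat_add (m - 1) hsummable_g]
    have hz : (∑ k ∈ Finset.range (m - 1),
        t ^ (k + 1) * c (k + 1) (A i) * c (k + 1) (A j)) = 0 := by
      refine Finset.sum_eq_zero ?_
      intro k hk
      have hk' : k < m - 1 := Finset.mem_range.mp hk
      have h0 : c (k + 1) (A i) = 0 := hrank i (k + 1) (by omega) (by omega)
      rw [h0]
      ring
    rw [hz, zero_add]
    refine tsum_congr ?_
    intro h
    have harith : h + (m - 1) + 1 = m + h := by omega
    rw [harith]
  -- the main identity
  have hmain : (∫ u in A i, ∫ v in A j, LSdens p e t u v) =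
      (∫ u in A i, p u) * (∫ u in A j, p u) +
        ∑' h : ℕ, t ^ (m + h) * c (m + h) (A i) * c (m + h) (A j) := by
    have hfub : (∫ u in A i, ∫ v in A j, LSdens p e t u v) =
        ∫ w, LSdens p e t w.1 w.2 ∂ρ := by
      rw [hρ, hμi, hμj]
      exact integral_integral (f := fun u v => LSdens p e t u v) hFInt
    rw [hfub, hFeq, integral_add hppInt hQint, hρ, integral_prod_mul p p, hswap, hreindex]
  refine ⟨hsummable_tail, hmain, ?_⟩
  -- the bound
  rw [hmain]
  have h1 : |(∫ u in A i, p u) * (∫ u in A j, p u) +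
      (∑' h : ℕ, t ^ (m + h) * c (m + h) (A i) * c (m + h) (A j)) -
      (∫ u in A i, p u) * (∫ u in A j, p u)| =
      |∑' h : ℕ, t ^ (m + h) * c (m + h) (A i) * c (m + h) (A j)| := by
    congr 1; ring
  rw [h1]
  have hg2 : Summable (fun h : ℕ => t ^ m * t ^ h) :=
    (summable_geometric_of_lt_one ht0 ht1).mul_left (t ^ m)
  calc |∑' h : ℕ, t ^ (m + h) * c (m + h) (A i) * c (m + h) (A j)|
      ≤ ∑' h : ℕ, |t ^ (m + h) * c (m + h) (A i) * c (m + h) (A j)| := by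
        simpa only [Real.norm_eq_abs] using
          norm_tsum_le_tsum_norm (f := fun h : ℕ => t ^ (m + h) * c (m + h) (A i) * c (m + h) (A j))
            (by simpa only [Real.norm_eq_abs] using hsummable_tail)
    _ ≤ ∑' h : ℕ, t ^ m * t ^ h := by
        refine Summable.tsum_le_tsum ?_ hsummable_tail hg2
        intro h
        calc |t ^ (m + h) * c (m + h) (A i) * c (m + h) (A j)| ≤ t ^ (m + h) := hterm_bd (m + h)
          _ = t ^ m * t ^ h := pow_add t m h
    _ = t ^ m * (1 - t)⁻¹ := by rw [tsum_mul_left, tsum_geometric_of_lt_one ht0 ht1]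
    _ = t ^ m / (1 - t) := by rw [div_eq_mul_inv]

end
end

section
/- Theorem 2 (macroscale decay of Rényi mutual information of integer order q): Let q ≥ 2 be an integer. For every multi-index (k₁,…,k_q) with all k_i ≥ 1, assume e_{k₁}⋯e_{k_q} ∈ L¹(μ) and set c(k₁,…,k_q) := ( ∫ e_{k₁}(u)⋯e_{k_q}(u) p(u) du )². Suppose S := sup_{k₁,…,k_q ≥ 1} c(k₁,…,k_q) < ∞. Then, under Assumption I, the Rényi mutual information of order q between two marginal components at distance r, given by R_q(r) := (1/(q−1)) · ln( 1 + Σ_{k₁,…,k_q ≥ 1} γ(r)^{k₁+⋯+k_q} c(k₁,…,k_q) ), satisfies R_q(r) = O(r^{-qϱ}) as r → ∞. -/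
open MeasureTheory Real Filter Asymptotics

noncomputable section

set_option maxHeartbeats 1000000

lemma geom_pi (t : ℝ) (ht0 : 0 ≤ t) (ht1 : t < 1) (q : ℕ) :
    Summable (fun k : Fin q → ℕ => t ^ (∑ i, (k i + 1))) ∧
      ∑' k : Fin q → ℕ, t ^ (∑ i, (k i + 1)) = (t / (1 - t)) ^ q := by
  induction q with
  | zero =>
    constructor
    · exact Summable.of_finite
    · rw [tsum_eq_single (default : Fin 0 → ℕ) (fun b hb => absurd (Subsingleton.elim b default) hb)]
      simp
  | succ q ih =>
    have hgeo : Summable (fun n : ℕ => t ^ (n + 1)) := by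
      simpa [pow_succ, mul_comm] using (summable_geometric_of_lt_one ht0 ht1).mul_left t
    have hgeosum : ∑' n : ℕ, t ^ (n + 1) = t / (1 - t) := by
      simp only [pow_succ, mul_comm (t ^ _) t]
      rw [tsum_mul_left, tsum_geometric_of_lt_one ht0 ht1, div_eq_mul_inv]
    have key : ∀ z : ℕ × (Fin q → ℕ),
        t ^ (∑ i : Fin (q+1), ((Fin.consEquiv fun _ => ℕ) z i + 1)) =
          t ^ (z.1 + 1) * t ^ (∑ i : Fin q, (z.2 i + 1)) := by
      intro z
      rw [Fin.sum_univ_succ, pow_add]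
      simp [Fin.consEquiv_apply, Fin.cons_zero, Fin.cons_succ]
    have hsum2 : Summable (fun z : ℕ × (Fin q → ℕ) => t ^ (z.1 + 1) * t ^ (∑ i : Fin q, (z.2 i + 1))) := by
      apply Summable.mul_of_nonneg hgeo ih.1
      · exact fun n => pow_nonneg ht0 _
      · exact fun k => pow_nonneg ht0 _
    have hsum : Summable (fun k : Fin (q+1) → ℕ => t ^ (∑ i, (k i + 1))) := by
      rw [← (Fin.consEquiv fun _ : Fin (q+1) => ℕ).summable_iff]
      exact hsum2.congr fun z => (key z).symm
    refine ⟨hsum, ?_⟩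
    rw [← (Fin.consEquiv fun _ : Fin (q+1) => ℕ).tsum_eq]
    have := tsum_mul_tsum_of_summable_norm (f := fun n : ℕ => t ^ (n+1))
      (g := fun k : Fin q → ℕ => t ^ (∑ i, (k i + 1)))
      (hgeo.congr fun n => (Real.norm_of_nonneg (pow_nonneg ht0 _)).symm)
      (ih.1.congr fun k => (Real.norm_of_nonneg (pow_nonneg ht0 _)).symm)
    calc ∑' z : ℕ × (Fin q → ℕ), t ^ (∑ i : Fin (q+1), ((Fin.consEquiv fun _ => ℕ) z i + 1))
        = ∑' z : ℕ × (Fin q → ℕ), t ^ (z.1 + 1) * t ^ (∑ i : Fin q, (z.2 i + 1)) :=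
          tsum_congr key
      _ = (∑' n : ℕ, t ^ (n+1)) * ∑' k : Fin q → ℕ, t ^ (∑ i, (k i + 1)) := this.symm
      _ = (t / (1 - t)) ^ (q + 1) := by rw [hgeosum, ih.2, pow_succ, mul_comm]


/-- **Theorem 2.** Macroscale decay of the Rényi mutual information of integer
order `q ≥ 2`: under Assumption I and uniform boundedness of the squared mixed
moments `c(k₁,…,k_q)`, `R_q(r) = O(r^{-qϱ})` as `r → ∞`. -/
theorem renyi_mutual_information_macroscale_decay
    (p : ℝ → ℝ) (e : ℕ → ℝ → ℝ) (γ : ℝ → ℝ) (ϱ : ℝ) (hϱ : 0 < ϱ)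
    (hp : IsProbDensity p) (he : OrthonormalSystem p e)
    (hγrange : ∀ r > (0 : ℝ), γ r ∈ Set.Ico (0 : ℝ) 1)
    (hγ0 : Tendsto γ atTop (nhds 0))
    (hγO : γ =O[atTop] fun r : ℝ => r ^ (-ϱ))
    (q : ℕ) (hq : 2 ≤ q)
    (hint : ∀ k : Fin q → ℕ,
      Integrable (fun u : ℝ => (∏ i : Fin q, e (k i + 1) u) * p u))
    (S : ℝ)
    (hS : ∀ k : Fin q → ℕ,
      (∫ u : ℝ, (∏ i : Fin q, e (k i + 1) u) * p u) ^ 2 ≤ S) :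
    (fun r : ℝ =>
        (1 / ((q : ℝ) - 1)) *
          Real.log
            (1 + ∑' k : Fin q → ℕ,
              γ r ^ (∑ i : Fin q, (k i + 1)) *
                (∫ u : ℝ, (∏ i : Fin q, e (k i + 1) u) * p u) ^ 2))
      =O[atTop] fun r : ℝ => r ^ (-((q : ℝ) * ϱ)) := by
  classical
  -- Abbreviation for the coefficients
  set c : (Fin q → ℕ) → ℝ := fun k => (∫ u : ℝ, (∏ i : Fin q, e (k i + 1) u) * p u) ^ 2 with hc
  have hc0 : ∀ k, 0 ≤ c k := fun k => sq_nonneg _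
  have hS0 : 0 ≤ S := le_trans (hc0 fun _ => 0) (hS fun _ => 0)
  obtain ⟨C₀, hC₀⟩ := hγO.bound
  set C := max C₀ 0 with hC
  have hq1 : (1 : ℝ) ≤ (q : ℝ) - 1 := by
    have : (2 : ℝ) ≤ (q : ℝ) := by exact_mod_cast hq
    linarith
  have hqpos : 0 < 1 / ((q : ℝ) - 1) := by positivity
  apply IsBigO.of_bound ((1 / ((q : ℝ) - 1)) * (S * (2 ^ q * C ^ q)))
  have hev1 : ∀ᶠ r : ℝ in atTop, (1 : ℝ) ≤ r := eventually_ge_atTop 1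
  have hev2 : ∀ᶠ r : ℝ in atTop, γ r < 1 / 2 :=
    hγ0.eventually_lt_const (by norm_num)
  filter_upwards [hev1, hev2, hC₀] with r hr1 hrhalf hrb
  have hr0 : (0 : ℝ) < r := lt_of_lt_of_le one_pos hr1
  obtain ⟨ht0, ht1⟩ := hγrange r hr0
  set t := γ r with htdef
  have hg := geom_pi t ht0 ht1 q
  -- summability of the series
  have hboundsum : Summable (fun k : Fin q → ℕ => t ^ (∑ i, (k i + 1)) * S) :=
    hg.1.mul_right S
  have hle : ∀ k : Fin q → ℕ, t ^ (∑ i, (k i + 1)) * c k ≤ t ^ (∑ i, (k i + 1)) * S :=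
    fun k => mul_le_mul_of_nonneg_left (hS k) (pow_nonneg ht0 _)
  have hfsum : Summable (fun k : Fin q → ℕ => t ^ (∑ i, (k i + 1)) * c k) :=
    Summable.of_nonneg_of_le (fun k => mul_nonneg (pow_nonneg ht0 _) (hc0 k)) hle hboundsum
  set T := ∑' k : Fin q → ℕ, t ^ (∑ i, (k i + 1)) * c k with hT
  have hT0 : 0 ≤ T := tsum_nonneg fun k => mul_nonneg (pow_nonneg ht0 _) (hc0 k)
  have hTle : T ≤ (t / (1 - t)) ^ q * S := by
    calc T ≤ ∑' k : Fin q → ℕ, t ^ (∑ i, (k i + 1)) * S := Summable.tsum_le_tsum hle hfsum hboundsum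
      _ = (∑' k : Fin q → ℕ, t ^ (∑ i, (k i + 1))) * S := tsum_mul_right
      _ = (t / (1 - t)) ^ q * S := by rw [hg.2]
  -- t / (1 - t) ≤ 2 * t
  have hhalf : t / (1 - t) ≤ 2 * t := by
    rw [div_le_iff₀ (by linarith : (0 : ℝ) < 1 - t)]
    nlinarith
  -- t ≤ C * r ^ (-ϱ)
  have hrpow0 : (0 : ℝ) ≤ r ^ (-ϱ) := Real.rpow_nonneg hr0.le _
  have htC : t ≤ C * r ^ (-ϱ) := by
    have h1 : t ≤ C₀ * r ^ (-ϱ) := by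
      have := hrb
      rwa [Real.norm_of_nonneg ht0, Real.norm_of_nonneg hrpow0] at this
    exact h1.trans (mul_le_mul_of_nonneg_right (le_max_left _ _) hrpow0)
  have hC0 : (0 : ℝ) ≤ C := le_max_right _ _
  have hTle2 : T ≤ S * (2 ^ q * (C ^ q * (r ^ (-ϱ)) ^ q)) := by
    have h2 : (t / (1 - t)) ^ q ≤ (2 * t) ^ q :=
      pow_le_pow_left₀ (div_nonneg ht0 (by linarith)) hhalf q
    have h3 : t ^ q ≤ (C * r ^ (-ϱ)) ^ q := pow_le_pow_left₀ ht0 htC q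
    calc T ≤ (t / (1 - t)) ^ q * S := hTle
      _ ≤ (2 * t) ^ q * S := mul_le_mul_of_nonneg_right h2 hS0
      _ = 2 ^ q * t ^ q * S := by rw [mul_pow]
      _ ≤ 2 ^ q * (C * r ^ (-ϱ)) ^ q * S := by
          exact mul_le_mul_of_nonneg_right
            (mul_le_mul_of_nonneg_left h3 (by positivity)) hS0
      _ = S * (2 ^ q * (C ^ q * (r ^ (-ϱ)) ^ q)) := by rw [mul_pow]; ring
  -- the log bound
  have hlog_le : Real.log (1 + T) ≤ T := by
    have := Real.log_le_sub_one_of_pos (by linarith : (0 : ℝ) < 1 + T)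
    linarith
  have hlog0 : 0 ≤ Real.log (1 + T) := Real.log_nonneg (by linarith)
  -- rewrite target power
  have hpow_eq : r ^ (-((q : ℝ) * ϱ)) = (r ^ (-ϱ)) ^ q := by
    rw [← Real.rpow_natCast (r ^ (-ϱ)) q, ← Real.rpow_mul hr0.le]
    ring_nf
  rw [Real.norm_of_nonneg (mul_nonneg hqpos.le hlog0),
    Real.norm_of_nonneg (by rw [hpow_eq]; positivity)]
  rw [hpow_eq]
  calc (1 / ((q : ℝ) - 1)) * Real.log (1 + T)
      ≤ (1 / ((q : ℝ) - 1)) * (S * (2 ^ q * (C ^ q * (r ^ (-ϱ)) ^ q))) :=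
        mul_le_mul_of_nonneg_left (hlog_le.trans hTle2) hqpos.le
    _ = 1 / ((q : ℝ) - 1) * (S * (2 ^ q * C ^ q)) * (r ^ (-ϱ)) ^ q := by ring


end
end

section
/- Multinomial expansion of the q-th moment of the Lancaster–Sarmanov kernel: let q ≥ 2 be an integer and t ∈ [0,1). Assume that for every multi-index (k₁,…,k_q) with all k_i ≥ 1 the product e_{k₁}⋯e_{k_q} belongs to L¹(μ), and that Σ_{k₁,…,k_q ≥ 1} t^{k₁+⋯+k_q} ( ∫ |e_{k₁}(u)⋯e_{k_q}(u)| p(u) du )² < ∞. Then Q_t(u,v)^q is integrable with respect to p(u)p(v) du dv and ∫∫ Q_t(u,v)^q p(u) p(v) du dv = Σ_{k₁,…,k_q ≥ 1} t^{k₁+⋯+k_q} ( ∫ e_{k₁}(u)⋯e_{k_q}(u) p(u) du )². -/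
open MeasureTheory Real Filter Asymptotics
open scoped ENNReal NNReal
set_option maxHeartbeats 1000000

noncomputable section

private lemma LS_tsum_pow {f : ℕ → ℝ} (hf : Summable fun k => |f k|) (q : ℕ) :
    Summable (fun k : Fin q → ℕ => ∏ i, |f (k i)|) ∧
      (∑' k, f k) ^ q = ∑' k : Fin q → ℕ, ∏ i, f (k i) := by
  induction q with
  | zero =>
    constructor
    · exact Summable.of_finite
    · have h1 : ∀ k : Fin 0 → ℕ, (∏ i, f (k i)) = 1 := by simp
      simp only [h1, pow_zero]
      simp [tsum_const]
  | succ q ih =>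
    obtain ⟨ihs, ihe⟩ := ih
    set E := Fin.consEquiv (fun _ : Fin (q + 1) => ℕ) with hE
    have habs : ∀ z : ℕ × (Fin q → ℕ),
        (∏ i, |f (E z i)|) = |f z.1| * ∏ i, |f (z.2 i)| := by
      intro z
      rw [Fin.prod_univ_succ]
      simp [hE, Fin.consEquiv]
    have hprod : ∀ z : ℕ × (Fin q → ℕ),
        (∏ i, f (E z i)) = f z.1 * ∏ i, f (z.2 i) := by
      intro z
      rw [Fin.prod_univ_succ]
      simp [hE, Fin.consEquiv]
    have h1 : (0 : ℕ → ℝ) ≤ fun k => |f k| := fun _ => abs_nonneg _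
    have h2 : (0 : (Fin q → ℕ) → ℝ) ≤ fun k => ∏ i, |f (k i)| :=
      fun k => Finset.prod_nonneg fun i _ => abs_nonneg _
    have hsumE : Summable fun z : ℕ × (Fin q → ℕ) => |f z.1| * ∏ i, |f (z.2 i)| :=
      Summable.mul_of_nonneg (f := fun k => |f k|)
        (g := fun k : Fin q → ℕ => ∏ i, |f (k i)|) hf ihs h1 h2
    constructor
    · rw [← E.summable_iff]
      exact hsumE.congr fun z => (habs z).symm
    · rw [pow_succ', ihe,
        tsum_mul_tsum_of_summable_norm (by simpa [Real.norm_eq_abs] using hf)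
          (by simpa [Real.norm_eq_abs, Finset.abs_prod] using ihs),
        ← E.tsum_eq]
      exact tsum_congr fun z => (hprod z).symm

private lemma LS_integral (p : ℝ → ℝ) (hp : Measurable p) (hp0 : ∀ᵐ u : ℝ, 0 ≤ p u)
    (f : ℝ → ℝ) : ∫ u, f u ∂(LSmeasure p) = ∫ u, f u * p u := by
  have h1 : LSmeasure p = volume.withDensity fun u => ((p u).toNNReal : ℝ≥0∞) := rfl
  rw [h1, integral_withDensity_eq_integral_smul hp.real_toNNReal]
  refine integral_congr_ae ?_
  filter_upwards [hp0] with u hu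
  simp [NNReal.smul_def, Real.coe_toNNReal _ hu, mul_comm]

private lemma LS_integrable (p : ℝ → ℝ) (hp : Measurable p) (hp0 : ∀ᵐ u : ℝ, 0 ≤ p u)
    {f : ℝ → ℝ} (hf : Integrable (fun u => f u * p u)) : Integrable f (LSmeasure p) := by
  rw [LSmeasure, integrable_withDensity_iff hp.ennreal_ofReal
    (ae_of_all _ fun x => ENNReal.ofReal_lt_top)]
  refine hf.congr ?_
  filter_upwards [hp0] with u hu
  rw [ENNReal.toReal_ofReal hu]

/-- **Multinomial expansion of the `q`-th moment of the Lancaster–Sarmanov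
kernel:** for integer `q ≥ 2` and `t ∈ [0,1)`, under the stated integrability
and summability assumptions, `Q_t^q` is integrable with respect to
`p(u) p(v) du dv` and
`∫∫ Q_t(u,v)^q p(u) p(v) du dv
  = ∑_{k₁,…,k_q ≥ 1} t^{k₁+⋯+k_q} (∫ e_{k₁} ⋯ e_{k_q} p)²`. -/
theorem LSker_pow_moment_expansion
    (p : ℝ → ℝ) (e : ℕ → ℝ → ℝ)
    (hp : IsProbDensity p) (he : OrthonormalSystem p e)
    (t : ℝ) (ht : t ∈ Set.Ico (0 : ℝ) 1)
    (hconv : KerConvergesInL2 p e t)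
    (q : ℕ) (hq : 2 ≤ q)
    (hint : ∀ k : Fin q → ℕ,
      Integrable (fun u : ℝ => (∏ i : Fin q, e (k i + 1) u) * p u))
    (hsum : Summable fun k : Fin q → ℕ =>
      t ^ (∑ i : Fin q, (k i + 1)) *
        (∫ u : ℝ, |∏ i : Fin q, e (k i + 1) u| * p u) ^ 2) :
    Integrable (fun w : ℝ × ℝ => (LSker e t w.1 w.2) ^ q)
        ((LSmeasure p).prod (LSmeasure p)) ∧
      (∫ w : ℝ × ℝ, (LSker e t w.1 w.2) ^ q
          ∂((LSmeasure p).prod (LSmeasure p)))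
        = ∑' k : Fin q → ℕ,
            t ^ (∑ i : Fin q, (k i + 1)) *
              (∫ u : ℝ, (∏ i : Fin q, e (k i + 1) u) * p u) ^ 2 := by
  obtain ⟨hpm, hp0, -⟩ := hp
  obtain ⟨-, hem, -⟩ := he
  obtain ⟨ht0, ht1⟩ := ht
  have hsf : SFinite (LSmeasure p) :=
    inferInstanceAs (SFinite (volume.withDensity fun u => ENNReal.ofReal (p u)))
  set μ := LSmeasure p with hμ
  haveI : SFinite μ := hsf
  set ν := μ.prod μ with hν
  -- the summand functions
  set F : (Fin q → ℕ) → ℝ × ℝ → ℝ :=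
    fun k w => ∏ i, (t ^ (k i + 1) * e (k i + 1) w.1 * e (k i + 1) w.2) with hF
  set G : (Fin q → ℕ) → ℝ → ℝ := fun k u => ∏ i, e (k i + 1) u with hG
  have hFsplit : ∀ k w, F k w = t ^ (∑ i, (k i + 1)) * (G k w.1 * G k w.2) := by
    intro k w
    simp only [hF, hG]
    rw [Finset.prod_mul_distrib, Finset.prod_mul_distrib, Finset.prod_pow_eq_pow_sum, mul_assoc]
  have hGmeas : ∀ k, Measurable (G k) := fun k => Finset.measurable_prod _ fun i _ => hem _
  have hFmeas : ∀ k, Measurable (F k) := by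
    intro k
    refine Finset.measurable_prod _ fun i _ => ?_
    exact (measurable_const.mul ((hem _).comp measurable_fst)).mul ((hem _).comp measurable_snd)
  have hGint : ∀ k, Integrable (G k) μ := fun k => LS_integrable p hpm hp0 (hint k)
  have hFint : ∀ k, Integrable (F k) ν := by
    intro k
    have h1 : Integrable (fun w : ℝ × ℝ => G k w.1 * G k w.2) ν := (hGint k).mul_prod (hGint k)
    have h2 := h1.const_mul (t ^ (∑ i, (k i + 1)))
    exact h2.congr (ae_of_all _ fun w => (hFsplit k w).symm)
  have hFval : ∀ k, ∫ w, F k w ∂ν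
      = t ^ (∑ i, (k i + 1)) * (∫ u : ℝ, (∏ i, e (k i + 1) u) * p u) ^ 2 := by
    intro k
    have h0 : (fun w : ℝ × ℝ => F k w)
        = fun w => t ^ (∑ i, (k i + 1)) * (G k w.1 * G k w.2) := funext (hFsplit k)
    rw [h0, integral_const_mul, hν, integral_prod_mul (f := G k) (g := G k), hμ,
      LS_integral p hpm hp0, sq]
  have hFabs : ∀ k w, |F k w| = t ^ (∑ i, (k i + 1)) * (|G k w.1| * |G k w.2|) := by
    intro k w
    rw [hFsplit, abs_mul, abs_mul, abs_of_nonneg (pow_nonneg ht0 _)]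
  have hFabsval : ∀ k, ∫ w, |F k w| ∂ν
      = t ^ (∑ i, (k i + 1)) * (∫ u : ℝ, |∏ i, e (k i + 1) u| * p u) ^ 2 := by
    intro k
    have h0 : (fun w : ℝ × ℝ => |F k w|)
        = fun w => t ^ (∑ i, (k i + 1)) * (|G k w.1| * |G k w.2|) := funext (hFabs k)
    rw [h0, integral_const_mul, hν,
      integral_prod_mul (f := fun u => |G k u|) (g := fun u => |G k u|), hμ,
      LS_integral p hpm hp0, sq]
  have hFlint : ∀ k, ∫⁻ w, ‖F k w‖₊ ∂ν
      = ENNReal.ofReal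
          (t ^ (∑ i, (k i + 1)) * (∫ u : ℝ, |∏ i, e (k i + 1) u| * p u) ^ 2) := by
    intro k
    simp only [← enorm_eq_nnnorm]
    rw [← ofReal_integral_norm_eq_lintegral_enorm (hFint k)]
    congr 1
    rw [← hFabsval k]
    simp only [Real.norm_eq_abs]
  have hlintsum : (∑' k : Fin q → ℕ, ∫⁻ w, ‖F k w‖₊ ∂ν) ≠ ⊤ := by
    simp only [hFlint]
    rw [← ENNReal.ofReal_tsum_of_nonneg
      (fun k => mul_nonneg (pow_nonneg ht0 _) (sq_nonneg _)) hsum]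
    exact ENNReal.ofReal_ne_top
  -- a.e. pointwise expansion
  have haeF : ∀ᵐ w ∂ν, (Summable fun k : Fin q → ℕ => |F k w|) ∧
      (LSker e t w.1 w.2) ^ q = ∑' k : Fin q → ℕ, F k w := by
    filter_upwards [hconv.1] with w hw
    have hw' : Summable fun j : ℕ => |t ^ (j + 1) * e (j + 1) w.1 * e (j + 1) w.2| :=
      summable_abs_iff.mpr hw
    obtain ⟨hs, heq⟩ := LS_tsum_pow hw' q
    have habsF : (fun k : Fin q → ℕ => |F k w|)
        = fun k => ∏ i, |t ^ (k i + 1) * e (k i + 1) w.1 * e (k i + 1) w.2| := by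
      funext k
      simp only [hF]
      exact Finset.abs_prod _ _
    refine ⟨by rw [habsF]; exact hs, ?_⟩
    have : LSker e t w.1 w.2
        = ∑' j : ℕ, t ^ (j + 1) * e (j + 1) w.1 * e (j + 1) w.2 := rfl
    rw [this, heq]
  -- measurability of the sum
  have hS : AEStronglyMeasurable (fun w => ∑' k : Fin q → ℕ, F k w) ν := by
    refine aestronglyMeasurable_of_tendsto_ae (atTop : Filter (Finset (Fin q → ℕ)))
      (f := fun s w => ∑ k ∈ s, F k w) (fun s => ?_) ?_
    · exact (Finset.measurable_sum s fun k _ => hFmeas k).aestronglyMeasurable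
    · filter_upwards [haeF] with w hw
      exact (summable_abs_iff.mp hw.1).hasSum
  -- integrability of the sum
  have hSint : Integrable (fun w => ∑' k : Fin q → ℕ, F k w) ν := by
    refine ⟨hS, ?_⟩
    rw [hasFiniteIntegral_def]
    have hb : ∀ᵐ w ∂ν, (‖∑' k : Fin q → ℕ, F k w‖₊ : ℝ≥0∞)
        ≤ ∑' k : Fin q → ℕ, (‖F k w‖₊ : ℝ≥0∞) := by
      filter_upwards [haeF] with w hw
      have h1 : Summable fun k : Fin q → ℕ => ‖F k w‖₊ := by
        rw [← NNReal.summable_coe]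
        simpa [Real.norm_eq_abs] using hw.1
      calc (‖∑' k : Fin q → ℕ, F k w‖₊ : ℝ≥0∞)
          ≤ ((∑' k : Fin q → ℕ, ‖F k w‖₊ : ℝ≥0) : ℝ≥0∞) :=
            ENNReal.coe_le_coe.mpr (nnnorm_tsum_le h1)
        _ = ∑' k : Fin q → ℕ, (‖F k w‖₊ : ℝ≥0∞) := ENNReal.coe_tsum h1
    refine lt_of_le_of_lt (lintegral_mono_ae hb) ?_
    simp only [← enorm_eq_nnnorm] at hlintsum ⊢
    rw [lintegral_tsum fun k => ((hFmeas k).enorm).aemeasurable]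
    exact hlintsum.lt_top
  have hQeq : (fun w : ℝ × ℝ => (LSker e t w.1 w.2) ^ q)
      =ᵐ[ν] fun w => ∑' k : Fin q → ℕ, F k w := haeF.mono fun w hw => hw.2
  constructor
  · exact hSint.congr hQeq.symm
  · rw [integral_congr_ae hQeq,
      integral_tsum (fun k => (hFmeas k).aestronglyMeasurable) hlintsum]
    exact tsum_congr fun k => hFval k

end
end

section
/- Sharp quantitative form of Lemma 1: under the hypotheses that Q_t converges in L²(μ⊗μ) and 1 + Q_t ≥ 0 a.e. for t ∈ [0,1), the Shannon mutual information S(t) := ∫∫ p_t(u,v) ln( p_t(u,v)/(p(u)p(v)) ) du dv satisfies 0 ≤ S(t) ≤ t²/(1−t²) for every t ∈ [0,1); in particular, under Assumption I, S(γ(r)) = O(r^{-2ϱ}) as r → ∞. -/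
open MeasureTheory Real Filter Asymptotics
open scoped ENNReal NNReal

noncomputable section

/-! ### Auxiliary lemmas -/

lemma LS_loglb {x : ℝ} (hx : -1 ≤ x) : x ≤ (1 + x) * Real.log (1 + x) := by
  rcases eq_or_lt_of_le hx with h | h
  · rw [← h]; norm_num
  · have hy : 0 < 1 + x := by linarith
    have h1 : Real.log (1 + x)⁻¹ ≤ (1 + x)⁻¹ - 1 :=
      Real.log_le_sub_one_of_pos (inv_pos.2 hy)
    rw [Real.log_inv] at h1
    have h2 := mul_le_mul_of_nonneg_left h1 hy.le
    have h3 : (1 + x) * (1 + x)⁻¹ = 1 := mul_inv_cancel₀ hy.ne'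
    nlinarith

lemma LS_logub {x : ℝ} (hx : -1 ≤ x) : (1 + x) * Real.log (1 + x) ≤ x + x ^ 2 := by
  rcases eq_or_lt_of_le hx with h | h
  · rw [← h]; norm_num
  · have hy : 0 < 1 + x := by linarith
    have h1 : Real.log (1 + x) ≤ (1 + x) - 1 := Real.log_le_sub_one_of_pos hy
    nlinarith [mul_le_mul_of_nonneg_left h1 hy.le]

lemma LS_main (p : ℝ → ℝ) (e : ℕ → ℝ → ℝ)
    (hp : IsProbDensity p) (he : OrthonormalSystem p e)
    {t : ℝ} (ht0 : 0 ≤ t) (ht1 : t < 1)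
    (hconv : KerConvergesInL2 p e t)
    (hnn : ∀ᵐ w : ℝ × ℝ ∂((LSmeasure p).prod (LSmeasure p)),
      0 ≤ 1 + LSker e t w.1 w.2) :
    0 ≤ (∫ u : ℝ, ∫ v : ℝ,
          LSdens p e t u v * Real.log (LSdens p e t u v / (p u * p v))) ∧
      (∫ u : ℝ, ∫ v : ℝ,
          LSdens p e t u v * Real.log (LSdens p e t u v / (p u * p v)))
        ≤ t ^ 2 / (1 - t ^ 2) := by
  obtain ⟨hpm, hpnn, hpint1⟩ := hp
  obtain ⟨he0, hem, horth⟩ := he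
  have ht2 : t ^ 2 < 1 := by nlinarith
  have ht2' : (0:ℝ) < 1 - t ^ 2 := by linarith
  -- basic facts about the measure
  have hpInt : Integrable p := by
    by_contra h
    rw [integral_undef h] at hpint1; norm_num at hpint1
  have hpm' : Measurable fun u => (p u).toNNReal := hpm.real_toNNReal
  haveI hprob : IsProbabilityMeasure (LSmeasure p) := by
    constructor
    rw [LSmeasure, withDensity_apply _ MeasurableSet.univ, setLIntegral_univ,
      ← ofReal_integral_eq_lintegral_ofReal hpInt hpnn, hpint1, ENNReal.ofReal_one]
  set μ : Measure ℝ := LSmeasure p with hμdef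
  set ν : Measure (ℝ × ℝ) := μ.prod μ with hνdef
  haveI : IsProbabilityMeasure ν := by rw [hνdef]; infer_instance
  -- withDensity conversion
  have hwd : ∀ g : ℝ → ℝ, ∫ u, g u ∂μ = ∫ u, g u * p u := by
    intro g
    have h1 : μ = volume.withDensity (fun u => ((p u).toNNReal : ℝ≥0∞)) := rfl
    rw [h1, integral_withDensity_eq_integral_smul hpm' g]
    refine integral_congr_ae (hpnn.mono fun u hu => ?_)
    simp only [NNReal.smul_def, smul_eq_mul]
    rw [Real.coe_toNNReal _ hu, mul_comm]
  -- orthonormality w.r.t. μ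
  have horthμ : ∀ k l, ∫ u, e k u * e l u ∂μ = if k = l then (1:ℝ) else 0 := by
    intro k l; rw [hwd]; exact horth k l
  -- each e k is in L²(μ)
  have heMulDiag : ∀ k, Integrable (fun u => e k u * e k u) μ := by
    intro k
    have h1 : (∫ u, e k u * e k u ∂μ) = 1 := by rw [horthμ]; simp
    by_contra h
    rw [integral_undef h] at h1; norm_num at h1
  have heL2 : ∀ k, MemLp (e k) 2 μ := by
    intro k
    refine (memLp_two_iff_integrable_sq (hem k).aestronglyMeasurable).2 ?_
    simpa [pow_two] using heMulDiag k
  have heMul : ∀ k l, Integrable (fun u => e k u * e l u) μ := by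
    intro k l
    have hb : Integrable (fun u => ((e k u)^2 + (e l u)^2)/2) μ :=
      ((heL2 k).integrable_sq.add (heL2 l).integrable_sq).div_const 2
    refine hb.mono' ((hem k).mul (hem l)).aestronglyMeasurable ?_
    refine Eventually.of_forall fun u => ?_
    rw [Real.norm_eq_abs, abs_le]
    constructor <;> nlinarith [sq_nonneg (e k u + e l u), sq_nonneg (e k u - e l u)]
  -- the summands on the product space
  set g : ℕ → ℝ × ℝ → ℝ := fun k w => t ^ (k+1) * e (k+1) w.1 * e (k+1) w.2 with hgdef
  set Sf : ℕ → ℝ × ℝ → ℝ := fun n w => ∑ k ∈ Finset.range n, g k w with hSfdef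
  set Q : ℝ × ℝ → ℝ := fun w => LSker e t w.1 w.2 with hQdef
  have hgm : ∀ k, Measurable (g k) := fun k =>
    (measurable_const.mul ((hem (k+1)).comp measurable_fst)).mul
      ((hem (k+1)).comp measurable_snd)
  have hSm : ∀ n, Measurable (Sf n) := fun n =>
    Finset.measurable_sum _ (fun k _ => hgm k)
  -- products of summands are integrable with known integrals
  have hggRw : ∀ k l, (fun w : ℝ × ℝ => g k w * g l w) = fun w =>
      (fun u => (t^(k+1) * t^(l+1)) * (e (k+1) u * e (l+1) u)) w.1 *
        (fun v => e (k+1) v * e (l+1) v) w.2 := by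
    intro k l; funext w; simp only [hgdef]; ring
  have hggInt : ∀ k l, Integrable (fun w => g k w * g l w) ν := by
    intro k l
    rw [hggRw k l]
    exact Integrable.mul_prod ((heMul (k+1) (l+1)).const_mul _) (heMul (k+1) (l+1))
  have hgg : ∀ k l, ∫ w, g k w * g l w ∂ν = if k = l then t ^ (2*(k+1)) else 0 := by
    intro k l
    rw [hggRw k l, hνdef]
    rw [integral_prod_mul (μ := μ) (ν := μ)
      (f := fun u => t^(k+1) * t^(l+1) * (e (k+1) u * e (l+1) u))
      (g := fun v => e (k+1) v * e (l+1) v)]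
    rw [integral_const_mul, horthμ]
    by_cases h : k = l
    · subst h
      simp [← pow_add, two_mul]
    · have h' : ¬ (k+1 = l+1) := by omega
      simp [h, h']
  have hgL2 : ∀ k, MemLp (g k) 2 ν := by
    intro k
    refine (memLp_two_iff_integrable_sq (hgm k).aestronglyMeasurable).2 ?_
    simpa [pow_two] using hggInt k k
  have hSL2 : ∀ n, MemLp (Sf n) 2 ν := fun n =>
    memLp_finset_sum (Finset.range n) (fun k _ => hgL2 k)
  have hSsqInt : ∀ n, Integrable (fun w => Sf n w ^ 2) ν := fun n =>
    (hSL2 n).integrable_sq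
  -- the L² norm of partial sums
  have hSsq : ∀ n, ∫ w, (Sf n w)^2 ∂ν = ∑ k ∈ Finset.range n, t ^ (2*(k+1)) := by
    intro n
    have hexp : ∀ w, (Sf n w)^2
        = ∑ k ∈ Finset.range n, ∑ l ∈ Finset.range n, g k w * g l w := by
      intro w
      rw [pow_two]
      simp only [hSfdef]
      rw [Finset.sum_mul_sum]
    simp only [hexp]
    rw [integral_finset_sum _ (fun k _ =>
      integrable_finset_sum _ (fun l _ => hggInt k l))]
    refine Finset.sum_congr rfl fun k hk => ?_
    rw [integral_finset_sum _ (fun l _ => hggInt k l)]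
    simp only [hgg]
    rw [Finset.sum_ite_eq (Finset.range n) k (fun _ => t ^ (2*(k+1)))]
    simp [Finset.mem_range.1 hk]
  have hCsum : ∀ n, ∑ k ∈ Finset.range n, t ^ (2*(k+1)) ≤ t^2 / (1 - t^2) := by
    intro n
    have hrw : ∑ k ∈ Finset.range n, t ^ (2*(k+1))
        = t^2 * ∑ k ∈ Finset.range n, (t^2)^k := by
      rw [Finset.mul_sum]
      refine Finset.sum_congr rfl fun k _ => ?_
      rw [← pow_mul, ← pow_add]
      congr 1
      ring
    rw [hrw]
    have hsumm : Summable (fun k : ℕ => (t^2)^k) :=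
      summable_geometric_of_lt_one (by positivity) ht2
    have hgs : ∑ k ∈ Finset.range n, (t^2)^k ≤ (1 - t^2)⁻¹ := by
      calc ∑ k ∈ Finset.range n, (t^2)^k ≤ ∑' k : ℕ, (t^2)^k :=
            Summable.sum_le_tsum _ (fun i _ => by positivity) hsumm
        _ = (1 - t^2)⁻¹ := tsum_geometric_of_lt_one (by positivity) ht2
    calc t^2 * ∑ k ∈ Finset.range n, (t^2)^k ≤ t^2 * (1 - t^2)⁻¹ :=
          mul_le_mul_of_nonneg_left hgs (sq_nonneg t)
      _ = t^2 / (1 - t^2) := by rw [div_eq_mul_inv]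
  -- a.e. convergence of partial sums to Q
  have haes : ∀ᵐ w ∂ν, Tendsto (fun n => Sf n w) atTop (nhds (Q w)) := by
    filter_upwards [hconv.1] with w hw
    exact hw.hasSum.tendsto_sum_nat
  have hQm : AEStronglyMeasurable Q ν :=
    aestronglyMeasurable_of_tendsto_ae atTop
      (fun n => (hSm n).aestronglyMeasurable) haes
  -- Fatou: ∫ Q² ≤ t²/(1-t²)
  have hQsq_lint : ∫⁻ w, ENNReal.ofReal (Q w ^ 2) ∂ν
      ≤ ENNReal.ofReal (t^2/(1-t^2)) := by
    have hmea : ∀ n, AEMeasurable (fun w => ENNReal.ofReal ((Sf n w)^2)) ν := fun n =>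
      (ENNReal.measurable_ofReal.comp ((hSm n).pow_const 2)).aemeasurable
    have hstep1 : ∫⁻ w, ENNReal.ofReal (Q w ^ 2) ∂ν
        = ∫⁻ w, liminf (fun n => ENNReal.ofReal ((Sf n w)^2)) atTop ∂ν := by
      refine lintegral_congr_ae ?_
      filter_upwards [haes] with w hw
      have h2 : Tendsto (fun n => (Sf n w)^2) atTop (nhds (Q w ^ 2)) := hw.pow 2
      exact ((ENNReal.continuous_ofReal.tendsto _).comp h2).liminf_eq.symm
    rw [hstep1]
    refine le_trans (lintegral_liminf_le' hmea) ?_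
    have hbd : ∀ n, ∫⁻ w, ENNReal.ofReal ((Sf n w)^2) ∂ν
        ≤ ENNReal.ofReal (t^2/(1-t^2)) := by
      intro n
      rw [← ofReal_integral_eq_lintegral_ofReal (hSsqInt n)
        (Eventually.of_forall fun w => sq_nonneg _)]
      exact ENNReal.ofReal_le_ofReal ((hSsq n).le.trans (by simpa using hCsum n))
    calc liminf (fun n => ∫⁻ w, ENNReal.ofReal ((Sf n w)^2) ∂ν) atTop
        ≤ liminf (fun _ : ℕ => ENNReal.ofReal (t^2/(1-t^2))) atTop :=
          liminf_le_liminf (Eventually.of_forall hbd)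
      _ = ENNReal.ofReal (t^2/(1-t^2)) := liminf_const _
  have hQsqm : AEStronglyMeasurable (fun w => Q w ^ 2) ν := by
    exact (hQm.mul hQm).congr (Eventually.of_forall fun w => by simp [Pi.mul_apply, pow_two])
  have hQsqInt : Integrable (fun w => Q w ^ 2) ν := by
    refine ⟨hQsqm, ?_⟩
    rw [hasFiniteIntegral_iff_ofReal (Eventually.of_forall fun w => sq_nonneg _)]
    exact hQsq_lint.trans_lt ENNReal.ofReal_lt_top
  have hQL2 : MemLp Q 2 ν := (memLp_two_iff_integrable_sq hQm).2 hQsqInt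
  have hQint : Integrable Q ν := hQL2.integrable one_le_two
  have hQsq_le : ∫ w, Q w ^ 2 ∂ν ≤ t^2/(1-t^2) := by
    rw [integral_eq_lintegral_of_nonneg_ae
      (Eventually.of_forall fun w => sq_nonneg _) hQsqm]
    have hC0 : 0 ≤ t^2/(1-t^2) := by positivity
    calc (∫⁻ w, ENNReal.ofReal (Q w ^ 2) ∂ν).toReal
        ≤ (ENNReal.ofReal (t^2/(1-t^2))).toReal :=
          ENNReal.toReal_mono (by simp) hQsq_lint
      _ = t^2/(1-t^2) := ENNReal.toReal_ofReal hC0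
  -- ∫ Sf n = 0
  have heInt1 : ∀ k, k ≠ 0 → ∫ u, e k u ∂μ = 0 := by
    intro k hk
    have h1 : (∫ u, e k u * e 0 u ∂μ) = 0 := by rw [horthμ]; simp [hk]
    rw [← h1]
    refine integral_congr_ae (Eventually.of_forall fun u => ?_)
    simp [he0 u]
  have hgInt : ∀ k, Integrable (g k) ν := by
    intro k
    refine (Integrable.mul_prod (μ := μ) (ν := μ)
      (f := fun u => t^(k+1) * e (k+1) u) (g := fun v => e (k+1) v)
      (((heL2 (k+1)).integrable one_le_two).const_mul _)
      ((heL2 (k+1)).integrable one_le_two)).congr ?_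
    exact Eventually.of_forall fun w => by simp only [hgdef]
  have hSint' : ∀ n, Integrable (Sf n) ν := fun n =>
    integrable_finset_sum _ (fun k _ => hgInt k)
  have hSint : ∀ n, ∫ w, Sf n w ∂ν = 0 := by
    intro n
    simp only [hSfdef]
    rw [integral_finset_sum _ (fun k _ => hgInt k)]
    refine Finset.sum_eq_zero fun k _ => ?_
    have hstep : ∫ w, g k w ∂ν
        = (∫ u, t^(k+1) * e (k+1) u ∂μ) * ∫ v, e (k+1) v ∂μ := by
      rw [hνdef, ← integral_prod_mul]
    rw [hstep, heInt1 (k+1) (Nat.succ_ne_zero k), mul_zero]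
  -- ∫ Q = 0
  have hQint0 : ∫ w, Q w ∂ν = 0 := by
    have hsub2 : ∀ n, Integrable (fun w => (Q w - Sf n w)^2) ν := fun n =>
      (hQL2.sub (hSL2 n)).integrable_sq
    have hsub1 : ∀ n, Integrable (fun w => Q w - Sf n w) ν := fun n =>
      hQint.sub (hSint' n)
    have h2' : Tendsto (fun n => ∫ w, (Q w - Sf n w)^2 ∂ν) atTop (nhds 0) := hconv.2
    have htend : Tendsto (fun n => ∫ w, Q w - Sf n w ∂ν) atTop (nhds 0) := by
      rw [NormedAddCommGroup.tendsto_nhds_zero]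
      intro ε hε
      have hev := h2'.eventually (gt_mem_nhds (by positivity : (0:ℝ) < ε^2/2))
      filter_upwards [hev] with n hn
      have hptw : ∀ w, |Q w - Sf n w| ≤ (Q w - Sf n w)^2/ε + ε/4 := by
        intro w
        have h := sq_nonneg (|Q w - Sf n w| - ε/2)
        have h2 : |Q w - Sf n w|^2 = (Q w - Sf n w)^2 := sq_abs _
        rw [div_add' _ _ _ (ne_of_gt hε), le_div_iff₀ hε]
        nlinarith
      have hint : ∫ w, |Q w - Sf n w| ∂ν ≤ ∫ w, ((Q w - Sf n w)^2/ε + ε/4) ∂ν :=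
        integral_mono (hsub1 n).abs
          (((hsub2 n).div_const ε).add (integrable_const _)) hptw
      have heq : ∫ w, ((Q w - Sf n w)^2/ε + ε/4) ∂ν
          = (∫ w, (Q w - Sf n w)^2 ∂ν)/ε + ε/4 := by
        rw [integral_add ((hsub2 n).div_const ε) (integrable_const _),
          integral_div, integral_const]
        simp
      have hnorm : ‖∫ w, Q w - Sf n w ∂ν‖ ≤ ∫ w, |Q w - Sf n w| ∂ν := by
        simpa [Real.norm_eq_abs] using
          norm_integral_le_integral_norm (μ := ν) (fun w => Q w - Sf n w)
      have hfin : (∫ w, (Q w - Sf n w)^2 ∂ν)/ε + ε/4 < ε := by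
        have hlt : (∫ w, (Q w - Sf n w)^2 ∂ν)/ε < (ε^2/2)/ε :=
          (div_lt_div_iff_of_pos_right hε).2 hn
        have heps : (ε^2/2)/ε = ε/2 := by field_simp
        rw [heps] at hlt
        linarith
      calc ‖∫ w, Q w - Sf n w ∂ν‖ ≤ ∫ w, |Q w - Sf n w| ∂ν := hnorm
        _ ≤ (∫ w, (Q w - Sf n w)^2 ∂ν)/ε + ε/4 := heq ▸ hint
        _ < ε := hfin
    have hconst : Tendsto (fun _ : ℕ => ∫ w, Q w ∂ν) atTop (nhds 0) := by
      refine htend.congr fun n => ?_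
      rw [integral_sub hQint (hSint' n), hSint n, sub_zero]
    exact tendsto_nhds_unique tendsto_const_nhds hconst
  -- the entropy integrand
  set F : ℝ × ℝ → ℝ := fun w => (1 + Q w) * Real.log (1 + Q w) with hFdef
  have hFm : AEStronglyMeasurable F ν := by
    have h1 : AEMeasurable (fun w => 1 + Q w) ν :=
      aemeasurable_const.add hQm.aemeasurable
    have h2 : AEMeasurable (fun w => Real.log (1 + Q w)) ν :=
      Real.measurable_log.comp_aemeasurable h1
    exact (h1.mul h2).aestronglyMeasurable
  have hbd : ∀ᵐ w ∂ν, Q w ≤ F w ∧ F w ≤ Q w + Q w ^ 2 := by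
    filter_upwards [hnn] with w hw
    have hx : -1 ≤ Q w := by
      have : Q w = LSker e t w.1 w.2 := rfl
      linarith [hw]
    exact ⟨LS_loglb hx, LS_logub hx⟩
  have hFint : Integrable F ν := by
    refine (hQint.abs.add hQsqInt).mono' hFm ?_
    filter_upwards [hbd] with w hw
    rw [Real.norm_eq_abs, abs_le]
    simp only [Pi.add_apply]
    constructor
    · nlinarith [neg_abs_le (Q w), sq_nonneg (Q w), hw.1]
    · nlinarith [le_abs_self (Q w), hw.2]
  have hS_lb : 0 ≤ ∫ w, F w ∂ν := by
    have h := integral_mono_ae hQint hFint (hbd.mono fun w h => h.1)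
    rw [hQint0] at h
    exact h
  have hS_ub : ∫ w, F w ∂ν ≤ t^2/(1-t^2) := by
    have hint2 : Integrable (fun w => Q w + Q w ^ 2) ν := hQint.add hQsqInt
    have h := integral_mono_ae hFint hint2 (hbd.mono fun w h => h.2)
    rw [integral_add hQint hQsqInt, hQint0, zero_add] at h
    linarith [hQsq_le]
  -- identification of the iterated integral with ∫ F dν
  have hiter : (∫ u : ℝ, ∫ v : ℝ,
      LSdens p e t u v * Real.log (LSdens p e t u v / (p u * p v)))
      = ∫ w, F w ∂ν := by
    have hcalc : ∫ w, F w ∂ν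
        = ∫ u : ℝ, ∫ v : ℝ,
            LSdens p e t u v * Real.log (LSdens p e t u v / (p u * p v)) := by
      calc ∫ w, F w ∂ν = ∫ u, ∫ v, F (u, v) ∂μ ∂μ := integral_prod _ hFint
        _ = ∫ u, (∫ v, F (u, v) * p v) ∂μ :=
            integral_congr_ae (Eventually.of_forall fun u => hwd _)
        _ = ∫ u, (∫ v, F (u, v) * p v) * p u := hwd _
        _ = ∫ u, ∫ v, F (u, v) * p v * p u := by
            refine integral_congr_ae (Eventually.of_forall fun u => ?_)
            show (∫ v, F (u, v) * p v) * p u = ∫ v, F (u, v) * p v * p u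
            rw [integral_mul_const]
        _ = ∫ u : ℝ, ∫ v : ℝ,
              LSdens p e t u v * Real.log (LSdens p e t u v / (p u * p v)) := by
            refine integral_congr_ae (Eventually.of_forall fun u => ?_)
            refine integral_congr_ae (Eventually.of_forall fun v => ?_)
            show F (u, v) * p v * p u
              = LSdens p e t u v * Real.log (LSdens p e t u v / (p u * p v))
            have hFuv : F (u, v) = (1 + LSker e t u v) * Real.log (1 + LSker e t u v) := rfl
            by_cases hpq : p u * p v = 0
            · have h2 : LSdens p e t u v = 0 := by rw [LSdens, hpq, zero_mul]
              rw [h2, hFuv, zero_mul]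
              rcases mul_eq_zero.1 hpq with h | h <;> rw [h] <;> ring
            · have h1 : LSdens p e t u v / (p u * p v) = 1 + LSker e t u v := by
                rw [LSdens, mul_comm (p u * p v) (1 + LSker e t u v),
                  mul_div_assoc, div_self hpq, mul_one]
              rw [h1, LSdens, hFuv]
              ring
    exact hcalc.symm
  rw [hiter]
  exact ⟨hS_lb, hS_ub⟩

/-- **Sharp quantitative form of Lemma 1:** for every `t ∈ [0,1)` the Shannon
mutual information `S(t)` of the Lancaster–Sarmanov bivariate distribution
satisfies `0 ≤ S(t) ≤ t²/(1−t²)`; in particular, under Assumption I,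
`S(γ(r)) = O(r^{-2ϱ})` as `r → ∞`. -/
theorem shannon_mutual_information_sharp_bound
    (p : ℝ → ℝ) (e : ℕ → ℝ → ℝ) (γ : ℝ → ℝ) (ϱ : ℝ) (hϱ : 0 < ϱ)
    (hp : IsProbDensity p) (he : OrthonormalSystem p e)
    (hconv : ∀ t ∈ Set.Ico (0 : ℝ) 1, KerConvergesInL2 p e t)
    (hnonneg : ∀ t ∈ Set.Ico (0 : ℝ) 1,
      ∀ᵐ w : ℝ × ℝ ∂((LSmeasure p).prod (LSmeasure p)),
        0 ≤ 1 + LSker e t w.1 w.2)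
    (hγrange : ∀ r > (0 : ℝ), γ r ∈ Set.Ico (0 : ℝ) 1)
    (hγ0 : Tendsto γ atTop (nhds 0))
    (hγO : γ =O[atTop] fun r : ℝ => r ^ (-ϱ)) :
    (∀ t ∈ Set.Ico (0 : ℝ) 1,
        0 ≤ (∫ u : ℝ, ∫ v : ℝ,
              LSdens p e t u v * Real.log (LSdens p e t u v / (p u * p v))) ∧
          (∫ u : ℝ, ∫ v : ℝ,
              LSdens p e t u v * Real.log (LSdens p e t u v / (p u * p v)))
            ≤ t ^ 2 / (1 - t ^ 2)) ∧
      (fun r : ℝ =>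
          ∫ u : ℝ, ∫ v : ℝ,
            LSdens p e (γ r) u v *
              Real.log (LSdens p e (γ r) u v / (p u * p v)))
        =O[atTop] fun r : ℝ => r ^ (-(2 * ϱ)) := by
  have key : ∀ t ∈ Set.Ico (0 : ℝ) 1,
      0 ≤ (∫ u : ℝ, ∫ v : ℝ,
            LSdens p e t u v * Real.log (LSdens p e t u v / (p u * p v))) ∧
        (∫ u : ℝ, ∫ v : ℝ,
            LSdens p e t u v * Real.log (LSdens p e t u v / (p u * p v)))
          ≤ t ^ 2 / (1 - t ^ 2) :=
    fun t ht => LS_main p e hp he ht.1 ht.2 (hconv t ht) (hnonneg t ht)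
  refine ⟨key, ?_⟩
  have hev1 : ∀ᶠ r in atTop, |γ r| < 1/2 := by
    have h : ∀ᶠ x in nhds (0:ℝ), x ∈ Set.Ioo (-(1/2) : ℝ) (1/2) :=
      Ioo_mem_nhds (by norm_num) (by norm_num)
    filter_upwards [hγ0.eventually h] with r hr
    rw [abs_lt]; exact ⟨hr.1, hr.2⟩
  have hO1 : (fun r : ℝ =>
      ∫ u : ℝ, ∫ v : ℝ, LSdens p e (γ r) u v *
        Real.log (LSdens p e (γ r) u v / (p u * p v)))
      =O[atTop] fun r => (γ r)^2 := by
    refine IsBigO.of_bound 2 ?_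
    filter_upwards [hev1, eventually_gt_atTop (0:ℝ)] with r h1 h2
    obtain ⟨hl, hu⟩ := key (γ r) (hγrange r h2)
    have h0 : 0 ≤ γ r := (hγrange r h2).1
    have ha : (γ r)^2 ≤ 1/4 := by
      rw [abs_of_nonneg h0] at h1; nlinarith
    have hb : (0:ℝ) < 1 - (γ r)^2 := by nlinarith
    have hc : (γ r)^2/(1 - (γ r)^2) ≤ 2 * (γ r)^2 := by
      rw [div_le_iff₀ hb]; nlinarith [sq_nonneg (γ r)]
    rw [Real.norm_eq_abs, abs_of_nonneg hl, Real.norm_eq_abs, abs_of_nonneg (sq_nonneg (γ r))]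
    linarith
  have hO2 : (fun r : ℝ => (γ r)^2) =O[atTop] fun r : ℝ => r ^ (-(2 * ϱ)) := by
    have h := hγO.mul hγO
    refine (IsBigO.congr' h (Eventually.of_forall fun r => by ring) ?_)
    filter_upwards [eventually_gt_atTop (0:ℝ)] with r hr
    rw [← Real.rpow_add hr]
    ring_nf
  exact hO1.trans hO2

end
end
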